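/- arXiv:1207.3261 — 4 statements merged into one kernel-verified Lean document; each statement's English description precedes it below -/
import Mathlib

section
/- For a full-rank density matrix σ and Hermitian matrices f, g, and p, q ∈ (1,∞) with 1/p + 1/q = 1, the weighted inner product satisfies the Hölder-type inequality |Tr(σ^{1/2} f σ^{1/2} g)| ≤ ‖f‖_{p,σ} · ‖g‖_{q,σ}. -/
open Matrix
open scoped ComplexOrder

noncomputable section

/-- Square complex matrices. -/
abbrev Mat (d : ℕ) := Matrix (Fin d) (Fin d) ℂ

variable {d : ℕ}

/-- `A ^ r` for a selfadjoint matrix `A`, via the continuous functional calculus. -/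
def matPow (A : Mat d) (r : ℝ) : Mat d :=
  cfc (fun x : ℝ => x ^ r) A

/-- `|A| = (A† A)^{1/2}`. -/
def matAbs (A : Mat d) : Mat d :=
  cfc Real.sqrt (Aᴴ * A)

/-- Matrix logarithm via the continuous functional calculus. -/
def matLog (A : Mat d) : Mat d :=
  cfc Real.log A

/-- The `σ`-weighted `L_p` norm `‖f‖_{p,σ} = (Tr |σ^{1/(2p)} f σ^{1/(2p)}|^p)^{1/p}`. -/
def pnorm (σ f : Mat d) (p : ℝ) : ℝ :=
  ((matPow (matAbs (matPow σ (1/(2*p)) * f * matPow σ (1/(2*p)))) p).trace.re) ^ (1/p)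

lemma contOn (h : ℝ → ℝ) (A : Mat d) : ContinuousOn h (spectrum ℝ A) :=
  (Matrix.finite_real_spectrum (A := A)).continuousOn h

lemma contOn' (h g : ℝ → ℝ) (A : Mat d) : ContinuousOn h (g '' spectrum ℝ A) :=
  ((Matrix.finite_real_spectrum (A := A)).image g).continuousOn h

lemma trace_cfc' {A : Mat d} (hA : A.IsHermitian) (h : ℝ → ℝ) :
    (cfc h A).trace = ∑ i, (h (hA.eigenvalues i) : ℂ) := by
  rw [hA.cfc_eq, Matrix.IsHermitian.cfc, Unitary.conjStarAlgAut_apply, Matrix.trace_mul_cycle,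
    Unitary.coe_star_mul_self, Matrix.one_mul, Matrix.trace_diagonal]
  rfl

lemma matPow_isHermitian (σ : Mat d) (r : ℝ) : (matPow σ r).IsHermitian :=
  cfc_predicate _ _

lemma matPow_matAbs_eq {A : Mat d} (hA : A.IsHermitian) (r : ℝ) :
    matPow (matAbs A) r = cfc (fun x : ℝ => |x| ^ r) A := by
  have hsa : IsSelfAdjoint A := hA
  have h1 : Aᴴ * A = cfc (fun x : ℝ => x * x) A := by
    conv_lhs => rw [hA.eq]
    rw [cfc_mul _ _ A (contOn _ _) (contOn _ _), cfc_id' ℝ A]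
  have h2 : matAbs A = cfc (fun x : ℝ => |x|) A := by
    rw [matAbs, h1, ← cfc_comp Real.sqrt (fun x : ℝ => x * x) A hsa (contOn' _ _ _) (contOn _ _)]
    exact cfc_congr fun x _ => Real.sqrt_mul_self_eq_abs x
  rw [matPow, h2, ← cfc_comp (fun x : ℝ => x ^ r) (fun x : ℝ => |x|) A hsa (contOn' _ _ _) (contOn _ _)]
  rfl

lemma trace_re_pow_abs {A : Mat d} (hA : A.IsHermitian) (r : ℝ) :
    (matPow (matAbs A) r).trace.re = ∑ i, |hA.eigenvalues i| ^ r := by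
  rw [matPow_matAbs_eq hA r, trace_cfc' hA]
  simp

lemma matPow_add {σ : Mat d} (hσ : σ.PosDef) (a b : ℝ) :
    matPow σ a * matPow σ b = matPow σ (a + b) := by
  unfold matPow
  rw [← cfc_mul _ _ σ (contOn _ _) (contOn _ _)]
  apply cfc_congr
  intro x hx
  have hx' : x ∈ Set.range hσ.1.eigenvalues := hσ.1.spectrum_real_eq_range_eigenvalues ▸ hx
  obtain ⟨i, rfl⟩ := hx'
  exact (Real.rpow_add (hσ.eigenvalues_pos i) a b).symm

lemma trace_mul_le {A B : Mat d} (hA : A.IsHermitian) (hB : B.IsHermitian)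
    {p q : ℝ} (hpq : Real.HolderConjugate p q) :
    ‖(A * B).trace‖ ≤
      ((matPow (matAbs A) p).trace.re) ^ (1/p) * ((matPow (matAbs B) q).trace.re) ^ (1/q) := by
  set a := hA.eigenvalues with ha
  set b := hB.eigenvalues with hb
  set U := (hA.eigenvectorUnitary : Mat d) with hU
  set V := (hB.eigenvectorUnitary : Mat d) with hV
  set W : Mat d := star U * V with hWdef
  set w : Fin d → Fin d → ℝ := fun i j => Complex.normSq (W i j) with hw
  have hw0 : ∀ i j, 0 ≤ w i j := fun i j => Complex.normSq_nonneg _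
  have hUU : U * star U = 1 := mem_unitaryGroup_iff.mp hA.eigenvectorUnitary.2
  have hUU' : star U * U = 1 := mem_unitaryGroup_iff'.mp hA.eigenvectorUnitary.2
  have hVV : V * star V = 1 := mem_unitaryGroup_iff.mp hB.eigenvectorUnitary.2
  have hVV' : star V * V = 1 := mem_unitaryGroup_iff'.mp hB.eigenvectorUnitary.2
  have hWW : W * star W = 1 := by
    rw [hWdef, Matrix.star_mul, star_star, Matrix.mul_assoc, ← Matrix.mul_assoc V,
      hVV, Matrix.one_mul, hUU']
  have hWW' : star W * W = 1 := by
    rw [hWdef, Matrix.star_mul, star_star, Matrix.mul_assoc, ← Matrix.mul_assoc U,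
      hUU, Matrix.one_mul, hVV']
  have hrow : ∀ i, ∑ j, w i j = 1 := by
    intro i
    have h1 : (W * star W) i i = 1 := by rw [hWW, Matrix.one_apply_eq]
    rw [Matrix.mul_apply] at h1
    have : ∑ j, ((w i j : ℝ) : ℂ) = 1 := by
      rw [← h1]
      refine Finset.sum_congr rfl fun j _ => ?_
      rw [Matrix.star_apply, hw, ← Complex.mul_conj]
      rfl
    exact_mod_cast this
  have hcol : ∀ j, ∑ i, w i j = 1 := by
    intro j
    have h1 : (star W * W) j j = 1 := by rw [hWW', Matrix.one_apply_eq]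
    rw [Matrix.mul_apply] at h1
    have : ∑ i, ((w i j : ℝ) : ℂ) = 1 := by
      rw [← h1]
      refine Finset.sum_congr rfl fun i _ => ?_
      rw [Matrix.star_apply, hw, ← Complex.mul_conj, mul_comm]
      rfl
    exact_mod_cast this
  -- trace formula
  have key : (A * B).trace = ((∑ i, ∑ j, a i * b j * w i j : ℝ) : ℂ) := by
    have hAB : A * B = U * ((diagonal (RCLike.ofReal ∘ a) * W * diagonal (RCLike.ofReal ∘ b)))
        * star V := by
      conv_lhs => rw [hA.spectral_theorem, hB.spectral_theorem]
      simp only [hWdef, Matrix.mul_assoc, Unitary.conjStarAlgAut_apply, Unitary.coe_star, hU, hV, ha, hb]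
    have h1 : (A * B).trace
        = (diagonal (RCLike.ofReal ∘ a) * W * diagonal (RCLike.ofReal ∘ b) * star W).trace := by
      rw [hAB, Matrix.trace_mul_cycle]
      rw [show star V * U = star W by rw [hWdef, Matrix.star_mul, star_star]]
      rw [Matrix.trace_mul_comm]
    rw [h1]
    rw [Matrix.trace]
    push_cast
    refine Finset.sum_congr rfl fun i _ => ?_
    rw [Matrix.diag]
    rw [Matrix.mul_apply]
    refine Finset.sum_congr rfl fun j _ => ?_
    rw [Matrix.mul_diagonal, Matrix.diagonal_mul, Matrix.star_apply, hw]
    push_cast [← Complex.mul_conj]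
    simp only [Function.comp_apply, Complex.star_def,
      show (RCLike.ofReal : ℝ → ℂ) = Complex.ofReal from rfl]
    ring
  have hp0 : p ≠ 0 := hpq.pos.ne'
  have hq0 : q ≠ 0 := hpq.symm.pos.ne'
  rw [key, Complex.norm_real, Real.norm_eq_abs, trace_re_pow_abs hA p, trace_re_pow_abs hB q]
  have step1 : |∑ i, ∑ j, a i * b j * w i j| ≤ ∑ i, ∑ j, |a i| * |b j| * w i j := by
    refine (Finset.abs_sum_le_sum_abs _ _).trans (Finset.sum_le_sum fun i _ => ?_)
    refine (Finset.abs_sum_le_sum_abs _ _).trans (Finset.sum_le_sum fun j _ => ?_)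
    rw [abs_mul, abs_mul, abs_of_nonneg (hw0 i j)]
  refine step1.trans ?_
  set F : Fin d × Fin d → ℝ := fun ij => (w ij.1 ij.2) ^ (1/p) * |a ij.1| with hF
  set G : Fin d × Fin d → ℝ := fun ij => (w ij.1 ij.2) ^ (1/q) * |b ij.2| with hG
  have holder := Real.inner_le_Lp_mul_Lq Finset.univ F G hpq
  have hFG : ∑ ij ∈ Finset.univ, F ij * G ij = ∑ i, ∑ j, |a i| * |b j| * w i j := by
    rw [Fintype.sum_prod_type]
    refine Finset.sum_congr rfl fun i _ => Finset.sum_congr rfl fun j _ => ?_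
    have hw1 : w i j ^ (1/p) * w i j ^ (1/q) = w i j := by
      rw [← Real.rpow_add' (hw0 _ _) (by rw [one_div, one_div, hpq.inv_add_inv_eq_one]; norm_num),
        one_div, one_div, hpq.inv_add_inv_eq_one, Real.rpow_one]
    calc F (i, j) * G (i, j)
        = (w i j ^ (1/p) * w i j ^ (1/q)) * (|a i| * |b j|) := by rw [hF, hG]; ring
      _ = |a i| * |b j| * w i j := by rw [hw1]; ring
  have hFp : ∑ ij ∈ Finset.univ, |F ij| ^ p = ∑ i, |a i| ^ p := by
    rw [Fintype.sum_prod_type]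
    refine Finset.sum_congr rfl fun i _ => ?_
    have he : ∀ j, |F (i, j)| ^ p = w i j * |a i| ^ p := by
      intro j
      rw [hF, abs_of_nonneg (mul_nonneg (Real.rpow_nonneg (hw0 i j) _) (abs_nonneg _)),
        Real.mul_rpow (Real.rpow_nonneg (hw0 i j) _) (abs_nonneg _),
        ← Real.rpow_mul (hw0 i j), one_div_mul_cancel hp0, Real.rpow_one]
    rw [Finset.sum_congr rfl fun j _ => he j, ← Finset.sum_mul, hrow i, one_mul]
  have hGq : ∑ ij ∈ Finset.univ, |G ij| ^ q = ∑ j, |b j| ^ q := by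
    rw [Fintype.sum_prod_type, Finset.sum_comm]
    refine Finset.sum_congr rfl fun j _ => ?_
    have he : ∀ i, |G (i, j)| ^ q = w i j * |b j| ^ q := by
      intro i
      rw [hG, abs_of_nonneg (mul_nonneg (Real.rpow_nonneg (hw0 i j) _) (abs_nonneg _)),
        Real.mul_rpow (Real.rpow_nonneg (hw0 i j) _) (abs_nonneg _),
        ← Real.rpow_mul (hw0 i j), one_div_mul_cancel hq0, Real.rpow_one]
    rw [Finset.sum_congr rfl fun i _ => he i, ← Finset.sum_mul, hcol j, one_mul]
  rw [hFG, hFp, hGq] at holder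
  exact holder


/-- Hölder-type inequality for the σ-weighted inner product. -/
theorem weighted_holder (σ f g : Mat d) (hσ : σ.PosDef) (hσ1 : σ.trace = 1)
    (hf : f.IsHermitian) (hg : g.IsHermitian)
    (p q : ℝ) (hp : 1 < p) (hq : 1 < q) (hpq : 1/p + 1/q = 1) :
    ‖(matPow σ (1/2) * f * matPow σ (1/2) * g).trace‖ ≤
      pnorm σ f p * pnorm σ g q := by
  have hpq' : Real.HolderConjugate p q := Real.holderConjugate_iff.mpr ⟨hp, by rw [← one_div, ← one_div]; exact hpq⟩
  set Sp := matPow σ (1/(2*p)) with hSpdef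
  set Sq := matPow σ (1/(2*q)) with hSqdef
  have hsum : 1/(2*q) + 1/(2*p) = 1/2 := by
    have h : 1/(2*q) + 1/(2*p) = (1/q + 1/p)/2 := by ring
    rw [h, show 1/q + 1/p = 1 from by linarith]
  have hhalfL : matPow σ (1/2) = Sq * Sp := by
    rw [hSqdef, hSpdef, matPow_add hσ, hsum]
  have hhalfR : matPow σ (1/2) = Sp * Sq := by
    rw [hSpdef, hSqdef, matPow_add hσ, show 1/(2*p) + 1/(2*q) = 1/2 from by linarith]
  set A := Sp * f * Sp with hA'
  set B := Sq * g * Sq with hB'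
  have hSpH : Sp.IsHermitian := matPow_isHermitian σ _
  have hSqH : Sq.IsHermitian := matPow_isHermitian σ _
  have hA : A.IsHermitian := by
    have := Matrix.isHermitian_mul_mul_conjTranspose Sp hf
    rwa [hSpH.eq] at this
  have hB : B.IsHermitian := by
    have := Matrix.isHermitian_mul_mul_conjTranspose Sq hg
    rwa [hSqH.eq] at this
  have htr : (matPow σ (1/2) * f * matPow σ (1/2) * g).trace = (A * B).trace := by
    nth_rewrite 1 [hhalfL]
    nth_rewrite 1 [hhalfR]
    rw [show Sq * Sp * f * (Sp * Sq) * g = Sq * (Sp * f * (Sp * (Sq * g))) from by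
      simp only [Matrix.mul_assoc]]
    rw [Matrix.trace_mul_comm, hA', hB']
    congr 1
    simp only [Matrix.mul_assoc]
  rw [htr]
  exact trace_mul_le hA hB hpq'
end
end

section
/- For a full-rank density matrix σ, Hermitian f, and p, q ∈ [1,∞), the L_p power operator I_{p,q}(f) = σ^{-1/(2p)} |σ^{1/(2q)} f σ^{1/(2q)}|^{q/p} σ^{-1/(2p)} satisfies ‖I_{p,q}(f)‖_{p,σ}^p = ‖f‖_{q,σ}^q. -/
open Matrix
open scoped ComplexOrder

noncomputable section

variable {d : ℕ}

/-- The `L_p` power operator `I_{p,q}(f) = σ^{-1/(2p)} |σ^{1/(2q)} f σ^{1/(2q)}|^{q/p} σ^{-1/(2p)}`. -/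
def Ipow (σ : Mat d) (p q : ℝ) (f : Mat d) : Mat d :=
  matPow σ (-(1/(2*p))) *
    matPow (matAbs (matPow σ (1/(2*q)) * f * matPow σ (1/(2*q)))) (q/p) *
      matPow σ (-(1/(2*p)))

lemma contOn_fin (f : ℝ → ℝ) {s : Set ℝ} (hs : s.Finite) : ContinuousOn f s := by
  rw [continuousOn_iff_continuous_restrict]
  have : Finite s := hs
  exact continuous_of_discreteTopology

lemma contOn_spec (f : ℝ → ℝ) (A : Mat d) : ContinuousOn f (spectrum ℝ A) :=
  contOn_fin f (Matrix.finite_real_spectrum (A := A))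

lemma contOn_img (f g : ℝ → ℝ) (A : Mat d) : ContinuousOn f (g '' spectrum ℝ A) :=
  contOn_fin f ((Matrix.finite_real_spectrum (A := A)).image g)


lemma spec_pos {σ : Mat d} (hσ : σ.PosDef) : ∀ x ∈ spectrum ℝ σ, 0 < x := by
  intro x hx
  rw [Matrix.IsHermitian.spectrum_real_eq_range_eigenvalues hσ.1] at hx
  obtain ⟨i, rfl⟩ := hx
  exact hσ.eigenvalues_pos i

lemma matPow_cfc {B : Mat d} (hB : B.IsHermitian) (g : ℝ → ℝ) (r : ℝ) :
    matPow (cfc g B) r = cfc (fun x => g x ^ r) B := by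
  unfold matPow
  exact (cfc_comp' (fun x : ℝ => x ^ r) g B (contOn_img _ _ _) (contOn_spec _ _) hB).symm

lemma cfc_herm {B : Mat d} (g : ℝ → ℝ) : (cfc g B).IsHermitian :=
  cfc_predicate g B

lemma matAbsCfc {B : Mat d} (hB : B.IsHermitian) (g : ℝ → ℝ) :
    cfc Real.sqrt ((cfc g B)ᴴ * (cfc g B)) = cfc (fun x => |g x|) B := by
  rw [(cfc_herm g (B := B)).eq, ← cfc_mul g g B (contOn_spec _ _) (contOn_spec _ _)]
  exact ((cfc_comp' Real.sqrt (fun x => g x * g x) B (contOn_img _ _ _)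
      (contOn_spec _ _) hB).symm).trans
    (cfc_congr fun x _ => Real.sqrt_mul_self_eq_abs (g x))

lemma matPow_zero {σ : Mat d} (hσ : σ.IsHermitian) : matPow σ 0 = 1 := by
  unfold matPow
  have : cfc (fun x : ℝ => x ^ (0:ℝ)) σ = cfc (1 : ℝ → ℝ) σ :=
    cfc_congr fun x _ => Real.rpow_zero x
  rw [this, cfc_one ℝ σ]

lemma trace_cfc'_s2 {B : Mat d} (hB : B.IsHermitian) (g : ℝ → ℝ) :
    (cfc g B).trace = ∑ i, (g (hB.eigenvalues i) : ℂ) := by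
  rw [hB.cfc_eq, Matrix.IsHermitian.cfc, Unitary.conjStarAlgAut_apply]
  rw [Matrix.trace_mul_cycle]
  have hU : star (hB.eigenvectorUnitary : Mat d) * (hB.eigenvectorUnitary : Mat d) = 1 :=
    (Unitary.mem_iff.mp hB.eigenvectorUnitary.2).1
  rw [hU, Matrix.one_mul, Matrix.trace_diagonal]
  rfl


/-- `‖I_{p,q}(f)‖_{p,σ}^p = ‖f‖_{q,σ}^q`. -/
theorem Ipow_norm (σ f : Mat d) (hσ : σ.PosDef) (hσ1 : σ.trace = 1)
    (hf : f.IsHermitian) (p q : ℝ) (hp : 1 ≤ p) (hq : 1 ≤ q) :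
    pnorm σ (Ipow σ p q f) p ^ p = pnorm σ f q ^ q := by
  have hp0 : (0:ℝ) < p := lt_of_lt_of_le one_pos hp
  have hq0 : (0:ℝ) < q := lt_of_lt_of_le one_pos hq
  set s := matPow σ (1/(2*q)) with hs_def
  have hsH : s.IsHermitian := cfc_predicate _ σ
  set B := s * f * s with hB_def
  have hB : B.IsHermitian := by
    show Bᴴ = B
    rw [hB_def, conjTranspose_mul, conjTranspose_mul, hsH.eq, hf.eq, Matrix.mul_assoc]
  have hAbsB : matAbs B = cfc (fun x : ℝ => |x|) B := by
    have h1 : B = cfc (fun x : ℝ => x) B := (cfc_id' ℝ B hB).symm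
    show cfc Real.sqrt (Bᴴ * B) = _
    conv_lhs => rw [h1]
    exact matAbsCfc hB (fun x : ℝ => x)
  have hC : matPow (matAbs B) (q/p) = cfc (fun x : ℝ => |x| ^ (q/p)) B := by
    rw [hAbsB]; exact matPow_cfc hB _ _
  have hmul1 : matPow σ (1/(2*p)) * matPow σ (-(1/(2*p))) = 1 := by
    rw [matPow_add hσ, add_neg_cancel, matPow_zero hσ.1]
  have hmul2 : matPow σ (-(1/(2*p))) * matPow σ (1/(2*p)) = 1 := by
    rw [matPow_add hσ, neg_add_cancel, matPow_zero hσ.1]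
  have hsand : matPow σ (1/(2*p)) * Ipow σ p q f * matPow σ (1/(2*p))
      = cfc (fun x : ℝ => |x| ^ (q/p)) B := by
    unfold Ipow
    rw [← hs_def, ← hB_def, hC]
    set t := matPow σ (1/(2*p))
    set u := matPow σ (-(1/(2*p)))
    set C := cfc (fun x : ℝ => |x| ^ (q/p)) B
    calc t * (u * C * u) * t = (t * u) * C * (u * t) := by
          simp only [Matrix.mul_assoc]
      _ = C := by rw [hmul1, hmul2, Matrix.one_mul, Matrix.mul_one]
  have habs2 : matAbs (cfc (fun x : ℝ => |x| ^ (q/p)) B) = cfc (fun x : ℝ => |x| ^ (q/p)) B := by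
    rw [show matAbs (cfc (fun x : ℝ => |x| ^ (q/p)) B)
        = cfc Real.sqrt ((cfc (fun x : ℝ => |x| ^ (q/p)) B)ᴴ * cfc (fun x : ℝ => |x| ^ (q/p)) B) from rfl,
      matAbsCfc hB]
    exact cfc_congr fun x _ => abs_of_nonneg (Real.rpow_nonneg (abs_nonneg x) _)
  have hpowp : matPow (cfc (fun x : ℝ => |x| ^ (q/p)) B) p = cfc (fun x : ℝ => |x| ^ q) B := by
    rw [matPow_cfc hB]
    exact cfc_congr fun x _ => by
      rw [← Real.rpow_mul (abs_nonneg x), div_mul_cancel₀ q hp0.ne']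
  have hpowq : matPow (matAbs B) q = cfc (fun x : ℝ => |x| ^ q) B := by
    rw [hAbsB, matPow_cfc hB]
  have hTre : (cfc (fun x : ℝ => |x| ^ q) B).trace.re = ∑ i, |hB.eigenvalues i| ^ q := by
    rw [trace_cfc'_s2 hB, ← Complex.ofReal_sum, Complex.ofReal_re]
  have hT0 : 0 ≤ (cfc (fun x : ℝ => |x| ^ q) B).trace.re := by
    rw [hTre]
    exact Finset.sum_nonneg fun i _ => Real.rpow_nonneg (abs_nonneg _) _
  unfold pnorm
  rw [hsand, habs2, hpowp, ← hB_def, hpowq]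
  rw [← Real.rpow_mul hT0, ← Real.rpow_mul hT0, one_div_mul_cancel hp0.ne',
    one_div_mul_cancel hq0.ne']
end
end

section
/- For full-rank density matrices ρ and σ, the L_2 relative entropy evaluated at Γ_σ^{-1/2}(√ρ) = σ^{-1/4} ρ^{1/2} σ^{-1/4} equals half the quantum relative entropy: Ent_2(σ^{-1/4} ρ^{1/2} σ^{-1/4}) = (1/2) Tr(ρ(log ρ − log σ)). -/
open Matrix
open scoped ComplexOrder

noncomputable section

variable {d : ℕ}

/-- The `L_2` relative entropy, with `G = σ^{1/4} f σ^{1/4}`: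
`Ent_2(f) = Tr(G² log G) − (1/2) Tr(G² log σ) − (1/2) ‖f‖²_{2,σ} log ‖f‖²_{2,σ}`. -/
def Ent2 (σ f : Mat d) : ℝ :=
  (((matPow σ (1/4) * f * matPow σ (1/4)) ^ 2 *
      matLog (matPow σ (1/4) * f * matPow σ (1/4))).trace.re)
  - (1/2) * (((matPow σ (1/4) * f * matPow σ (1/4)) ^ 2 * matLog σ).trace.re)
  - (1/2) * (((matPow σ (1/4) * f * matPow σ (1/4)) ^ 2).trace.re) *
      Real.log (((matPow σ (1/4) * f * matPow σ (1/4)) ^ 2).trace.re)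


lemma contOn_finite {s : Set ℝ} (hs : s.Finite) (f : ℝ → ℝ) : ContinuousOn f s := by
  have : Finite s := hs
  have : DiscreteTopology s := Finite.instDiscreteTopology
  rw [continuousOn_iff_continuous_restrict]
  exact continuous_of_discreteTopology

lemma spec_pos_s7 {A : Mat d} (hA : A.PosDef) {x : ℝ} (hx : x ∈ spectrum ℝ A) : 0 < x := by
  rw [hA.isHermitian.spectrum_real_eq_range_eigenvalues] at hx
  obtain ⟨i, rfl⟩ := hx
  exact hA.eigenvalues_pos i

lemma matPow_mul_matPow {A : Mat d} (hA : A.PosDef) (r s : ℝ) :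
    matPow A r * matPow A s = matPow A (r + s) := by
  unfold matPow
  rw [← cfc_mul _ _ A (contOn_spec _ A) (contOn_spec _ A)]
  exact cfc_congr fun x hx => (Real.rpow_add (spec_pos_s7 hA hx) r s).symm

lemma matPow_zero_s7 {A : Mat d} (hA : A.PosDef) : matPow A 0 = 1 := by
  unfold matPow
  rw [show (fun x : ℝ => x ^ (0:ℝ)) = 1 from funext fun x => Real.rpow_zero x]
  exact cfc_one ℝ A hA.1

lemma matPow_one {A : Mat d} (hA : A.PosDef) : matPow A 1 = A := by
  unfold matPow
  rw [show (fun x : ℝ => x ^ (1:ℝ)) = id from funext fun x => Real.rpow_one x]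
  exact cfc_id ℝ A hA.1

lemma matLog_matPow_half {A : Mat d} (hA : A.PosDef) :
    matLog (matPow A (1/2)) = (1/2 : ℝ) • matLog A := by
  unfold matLog matPow
  have hfin : ((fun x : ℝ => x ^ (1/2 : ℝ)) '' spectrum ℝ A).Finite :=
    Set.Finite.image _ (Matrix.finite_real_spectrum (A := A))
  have hcomp := cfc_comp Real.log (fun x : ℝ => x ^ (1/2 : ℝ)) A hA.1
    (contOn_finite hfin _) (contOn_spec _ A)
  rw [← hcomp]
  rw [show cfc (Real.log ∘ fun x : ℝ => x ^ (1/2 : ℝ)) A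
      = cfc (fun x : ℝ => (1/2 : ℝ) * Real.log x) A from
    cfc_congr fun x hx => Real.log_rpow (spec_pos_s7 hA hx) _]
  exact cfc_const_mul _ _ A (contOn_spec _ A)

/-- `Ent_2(σ^{-1/4} ρ^{1/2} σ^{-1/4}) = (1/2) D(ρ‖σ)`. -/
theorem ent2_relative_density (σ ρ : Mat d)
    (hσ : σ.PosDef) (hσ1 : σ.trace = 1) (hρ : ρ.PosDef) (hρ1 : ρ.trace = 1) :
    Ent2 σ (matPow σ (-(1/4)) * matPow ρ (1/2) * matPow σ (-(1/4)))
      = (1/2) * (ρ * (matLog ρ - matLog σ)).trace.re := by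
  have h14 : matPow σ (1/4) * matPow σ (-(1/4)) = 1 := by
    rw [matPow_mul_matPow hσ]; norm_num [matPow_zero_s7 hσ]
  have h41 : matPow σ (-(1/4)) * matPow σ (1/4) = 1 := by
    rw [matPow_mul_matPow hσ]; norm_num [matPow_zero_s7 hσ]
  have hG : matPow σ (1/4) * (matPow σ (-(1/4)) * matPow ρ (1/2) * matPow σ (-(1/4)))
      * matPow σ (1/4) = matPow ρ (1/2) := by
    calc matPow σ (1/4) * (matPow σ (-(1/4)) * matPow ρ (1/2) * matPow σ (-(1/4)))
        * matPow σ (1/4)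
        = (matPow σ (1/4) * matPow σ (-(1/4))) * matPow ρ (1/2)
          * (matPow σ (-(1/4)) * matPow σ (1/4)) := by simp only [mul_assoc]
      _ = matPow ρ (1/2) := by rw [h14, h41, one_mul, mul_one]
  have hsq : (matPow ρ (1/2)) ^ 2 = ρ := by
    rw [sq, matPow_mul_matPow hρ]; norm_num [matPow_one hρ]
  have hlog := matLog_matPow_half hρ
  have htr : ρ.trace.re = 1 := by rw [hρ1]; simp
  unfold Ent2
  rw [hG, hsq, hlog, htr, Real.log_one, mul_zero, sub_zero]
  rw [mul_smul_comm, trace_smul, mul_sub, trace_sub]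
  simp [Complex.smul_re, Complex.sub_re]
  ring
end
end

section
/- Let T be a completely positive unital map on d×d matrices with Kraus operators {A_j}, i.e. T(g) = Σ_j A_j† g A_j. Then for any positive definite Hermitian g, the function h(s) = Tr(g^{2−s} T(g^s)) is convex on s ∈ [0,2]. -/
open Matrix
open scoped ComplexOrder

noncomputable section

variable {d : ℕ}

private lemma convexOn_exp_affine (m c : ℝ) :
    ConvexOn ℝ Set.univ (fun s : ℝ => Real.exp (m * s + c)) := by
  refine ⟨convex_univ, fun x _ y _ p q hp hq hpq => ?_⟩
  have h2 := convexOn_exp.2 (Set.mem_univ (m*x+c)) (Set.mem_univ (m*y+c)) hp hq hpq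
  have h1 : m * (p * x + q * y) + c = p * (m*x+c) + q*(m*y+c) := by
    linear_combination (-c) * hpq
  simp only [smul_eq_mul] at h2 ⊢
  rw [h1]
  exact h2

private lemma convexOn_rpow_term {a b : ℝ} (ha : 0 < a) (hb : 0 < b) :
    ConvexOn ℝ Set.univ (fun s : ℝ => a ^ (2 - s) * b ^ s) := by
  have h : (fun s : ℝ => a ^ (2 - s) * b ^ s)
      = fun s => Real.exp ((Real.log b - Real.log a) * s + 2 * Real.log a) := by
    funext s
    rw [Real.rpow_def_of_pos ha, Real.rpow_def_of_pos hb, ← Real.exp_add]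
    ring_nf
  rw [h]
  exact convexOn_exp_affine _ _

private lemma convexOn_sum' {ι : Type*} (t : Finset ι) (f : ι → ℝ → ℝ) {s : Set ℝ}
    (hs : Convex ℝ s) (h : ∀ i ∈ t, ConvexOn ℝ s (f i)) :
    ConvexOn ℝ s (fun x => ∑ i ∈ t, f i x) := by
  classical
  have key := Finset.sum_induction f (fun F => ConvexOn ℝ s F)
    (fun a b ha hb => ha.add hb) (convexOn_const 0 hs) h
  have heq : (fun x => ∑ i ∈ t, f i x) = ∑ i ∈ t, f i := by
    funext x; simp
  rw [heq]
  exact key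

private lemma trace_aux (U B : Mat d) (hU : U * Uᴴ = 1) (hU' : Uᴴ * U = 1) (f1 f2 : Fin d → ℂ) :
    (U * diagonal f1 * Uᴴ * (Bᴴ * (U * diagonal f2 * Uᴴ) * B)).trace
      = ∑ k, ∑ l, f1 k * f2 l *
          ((Uᴴ * B * U) l k * (starRingEnd ℂ) ((Uᴴ * B * U) l k)) := by
  have hM : U * diagonal f1 * Uᴴ * (Bᴴ * (U * diagonal f2 * Uᴴ) * B)
      = U * (diagonal f1 * (Uᴴ * B * U)ᴴ * diagonal f2 * (Uᴴ * B * U)) * Uᴴ := by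
    simp only [conjTranspose_mul, conjTranspose_conjTranspose, Matrix.mul_assoc, hU,
      Matrix.mul_one]
  rw [hM, Matrix.trace_mul_cycle, ← Matrix.mul_assoc, hU', Matrix.one_mul]
  generalize (Uᴴ * B * U) = C
  simp [Matrix.trace, Matrix.mul_apply, Matrix.diag, Matrix.diagonal_apply,
    conjTranspose_apply, Finset.mul_sum, Finset.sum_mul]
  exact Finset.sum_congr rfl fun k _ => Finset.sum_congr rfl fun l _ => by ring

private lemma matPow_spec (g : Mat d) (hA : g.IsHermitian) (r : ℝ) :
    matPow g r = (hA.eigenvectorUnitary : Mat d) *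
      diagonal (fun k => ((hA.eigenvalues k ^ r : ℝ) : ℂ)) *
      (hA.eigenvectorUnitary : Mat d)ᴴ := by
  rw [matPow, hA.cfc_eq, Matrix.IsHermitian.cfc]
  simp [Function.comp_def, Matrix.star_eq_conjTranspose]

/-- for a completely positive unital map `T(g) = Σ_j A_j† g A_j`,
the function `h(s) = Tr(g^{2−s} T(g^s))` is convex on `[0,2]` for positive definite `g`. -/
theorem kraus_h_convex {ι : Type*} [Fintype ι] (A : ι → Mat d)
    (hunital : ∑ j, (A j)ᴴ * A j = (1 : Mat d))
    (g : Mat d) (hg : g.PosDef) :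
    ConvexOn ℝ (Set.Icc (0 : ℝ) 2)
      (fun s : ℝ =>
        (matPow g (2 - s) * ∑ j, (A j)ᴴ * matPow g s * A j).trace.re) := by
  classical
  have hA : g.IsHermitian := hg.1
  set U : Mat d := (hA.eigenvectorUnitary : Mat d) with hUdef
  have hU : U * Uᴴ = 1 := by
    rw [← Matrix.star_eq_conjTranspose]
    exact Unitary.mul_star_self_of_mem (SetLike.coe_mem _)
  have hU' : Uᴴ * U = 1 := by
    rw [← Matrix.star_eq_conjTranspose]
    exact Unitary.star_mul_self_of_mem (SetLike.coe_mem _)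
  have hpos : ∀ k, 0 < hA.eigenvalues k := hg.eigenvalues_pos
  have key : ∀ s : ℝ,
      (matPow g (2 - s) * ∑ j, (A j)ᴴ * matPow g s * A j).trace.re
      = ∑ j, ∑ k, ∑ l, Complex.normSq ((Uᴴ * A j * U) l k) *
          (hA.eigenvalues k ^ (2 - s) * hA.eigenvalues l ^ s) := by
    intro s
    rw [Finset.mul_sum, Matrix.trace_sum]
    simp only [matPow_spec g hA, ← hUdef, trace_aux U _ hU hU', Complex.mul_conj,
      ← Complex.ofReal_mul, Complex.re_sum, Complex.ofReal_re]
    exact Finset.sum_congr rfl fun j _ => Finset.sum_congr rfl fun k _ =>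
      Finset.sum_congr rfl fun l _ => by ring
  have hfun : (fun s : ℝ =>
      (matPow g (2 - s) * ∑ j, (A j)ᴴ * matPow g s * A j).trace.re)
      = fun s : ℝ => ∑ j, ∑ k, ∑ l, Complex.normSq ((Uᴴ * A j * U) l k) *
          (hA.eigenvalues k ^ (2 - s) * hA.eigenvalues l ^ s) := funext key
  rw [hfun]
  refine convexOn_sum' _ _ (convex_Icc 0 2) fun j _ => ?_
  refine convexOn_sum' _ _ (convex_Icc 0 2) fun k _ => ?_
  refine convexOn_sum' _ _ (convex_Icc 0 2) fun l _ => ?_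
  have hconv := ((convexOn_rpow_term (hpos k) (hpos l)).smul
    (Complex.normSq_nonneg ((Uᴴ * A j * U) l k))).subset
    (Set.subset_univ _) (convex_Icc 0 2)
  simpa [smul_eq_mul] using hconv
end
end
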